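/- If ℓ = t(n−1) + 2 for a non-negative integer t, n ≥ 3, and T is a tree on n vertices with T ≠ K_{1,n−1}, then r(K_{1,ℓ}, T) = ℓ + n − 2. -/

import Mathlib

open SimpleGraph
open scoped Classical

/-- `H` embeds into `G`: there is an injective graph homomorphism from `H` to `G`. -/
def Copies {α : Type*} {β : Type*} (H : SimpleGraph α) (G : SimpleGraph β) : Prop :=
  ∃ f : α → β, Function.Injective f ∧ ∀ ⦃a b : α⦄, H.Adj a b → G.Adj (f a) (f b)

/-- the star `K_{1,ℓ}` with `ℓ` leaves and center `0`. -/
def starGraphK (ℓ : ℕ) : SimpleGraph (Fin (ℓ + 1)) :=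
  SimpleGraph.fromRel (fun a _ => a = 0)

/-- the graph of color `i` for a symmetric edge-coloring `c`. -/
def colorGraph {N k : ℕ} (c : Fin N → Fin N → Fin k) (i : Fin k) : SimpleGraph (Fin N) :=
  SimpleGraph.fromRel (fun a b => c a b = i)

/-- `K_N → (G₁, G₂)`: every red-blue coloring of `E(K_N)` yields a red `G₁` or a blue `G₂`. -/
def RamseyProp2 {α β : Type*} (N : ℕ) (G₁ : SimpleGraph α) (G₂ : SimpleGraph β) : Prop :=
  ∀ R : SimpleGraph (Fin N), Copies G₁ R ∨ Copies G₂ Rᶜ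

/-- the 2-color Ramsey number `r(G₁, G₂)`. -/
noncomputable def ramsey2 {α β : Type*} (G₁ : SimpleGraph α) (G₂ : SimpleGraph β) : ℕ :=
  sInf {N | RamseyProp2 N G₁ G₂}

/-- `K_N → (G₁, G₂, G₃)` for 3-colorings. -/
def RamseyProp3 {α β γ : Type*} (N : ℕ) (G₁ : SimpleGraph α) (G₂ : SimpleGraph β)
    (G₃ : SimpleGraph γ) : Prop :=
  ∀ c : Fin N → Fin N → Fin 3, (∀ a b, c a b = c b a) →
    Copies G₁ (colorGraph c 0) ∨ Copies G₂ (colorGraph c 1) ∨ Copies G₃ (colorGraph c 2)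

/-- the 3-color Ramsey number `r(G₁, G₂, G₃)`. -/
noncomputable def ramsey3 {α β γ : Type*} (G₁ : SimpleGraph α) (G₂ : SimpleGraph β)
    (G₃ : SimpleGraph γ) : ℕ :=
  sInf {N | RamseyProp3 N G₁ G₂ G₃}

/-- the chromatic number as a natural number. -/
noncomputable def chrom {β : Type*} (H : SimpleGraph β) : ℕ :=
  sInf {k | H.Colorable k}

/-- the surplus `s(H)`: the minimum size of a color class over proper colorings of `H`
with `chrom H` colors. -/
noncomputable def surplus {β : Type*} [Fintype β] (H : SimpleGraph β) : ℕ :=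
  sInf {s | ∃ C : H.Coloring (Fin (chrom H)), ∃ i : Fin (chrom H),
    s = (Finset.univ.filter (fun v => C v = i)).card}

section TreeLemmas
set_option linter.unusedSectionVars false
variable {V : Type*} [DecidableEq V] {G : SimpleGraph V}

lemma exists_geodesic (hc : G.Connected) (u v : V) :
    ∃ p : G.Walk u v, p.IsPath ∧ p.length = G.dist u v := by
  obtain ⟨p, hp⟩ := hc.exists_walk_length_eq_dist u v
  refine ⟨p.bypass, SimpleGraph.Walk.bypass_isPath p, le_antisymm ?_ (SimpleGraph.dist_le _)⟩
  exact hp ▸ SimpleGraph.Walk.length_bypass_le p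

lemma geodesic_split (hc : G.Connected) {u v x : V} (p : G.Walk u v)
    (hlen : p.length = G.dist u v) (hx : x ∈ p.support) :
    G.dist u x + G.dist x v = G.dist u v := by
  have h1 : G.dist u x ≤ (p.takeUntil x hx).length := SimpleGraph.dist_le _
  have h2 : G.dist x v ≤ (p.dropUntil x hx).length := SimpleGraph.dist_le _
  have h3 : (p.takeUntil x hx).length + (p.dropUntil x hx).length = p.length := by
    rw [← SimpleGraph.Walk.length_append, SimpleGraph.Walk.take_spec]
  have h4 := hc.dist_triangle (u := u) (v := x) (w := v)
  omega

lemma tree_parent (hc : G.Connected) {r v : V} (hv : v ≠ r) :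
    ∃ w, G.Adj w v ∧ G.dist r w + 1 = G.dist r v := by
  obtain ⟨p, hp, hlen⟩ := exists_geodesic hc v r
  cases p with
  | nil => exact absurd rfl hv
  | @cons _ w _ h q =>
    refine ⟨w, h.symm, ?_⟩
    have hq : G.dist r w ≤ q.length := by
      rw [SimpleGraph.dist_comm]; exact SimpleGraph.dist_le q
    have hlen' : q.length + 1 = G.dist v r := by
      simpa [SimpleGraph.Walk.length_cons] using hlen
    have hle1 : G.dist w v ≤ 1 := by
      simpa using SimpleGraph.dist_le (SimpleGraph.Walk.cons h.symm SimpleGraph.Walk.nil)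
    have htri : G.dist r v ≤ G.dist r w + G.dist w v := hc.dist_triangle
    have hcomm : G.dist v r = G.dist r v := SimpleGraph.dist_comm ..
    omega

lemma tree_adj_dist_ne (hT : G.IsTree) (r : V) {x y : V} (hxy : G.Adj x y) :
    G.dist r x ≠ G.dist r y := by
  intro hd
  have hc := hT.isConnected
  obtain ⟨p, hp, hlen⟩ := exists_geodesic hc x r
  obtain ⟨q, hq, hqlen⟩ := exists_geodesic hc y r
  have hynp : y ∉ p.support := by
    intro hy
    have hsp := geodesic_split hc p hlen hy
    have h1 : 0 < G.dist x y := hc.pos_dist_of_ne hxy.ne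
    have c1 : G.dist y r = G.dist r y := SimpleGraph.dist_comm ..
    have c2 : G.dist x r = G.dist r x := SimpleGraph.dist_comm ..
    omega
  have hP : (SimpleGraph.Walk.cons hxy.symm p).IsPath := hp.cons hynp
  obtain ⟨P₀, _, huniq⟩ := hT.existsUnique_path y r
  have e1 := (huniq _ hP).trans (huniq _ hq).symm
  have e2 := congrArg SimpleGraph.Walk.length e1
  rw [SimpleGraph.Walk.length_cons] at e2
  have c1 : G.dist y r = G.dist r y := SimpleGraph.dist_comm ..
  have c2 : G.dist x r = G.dist r x := SimpleGraph.dist_comm ..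
  omega

lemma tree_closer_unique (hT : G.IsTree) {r v w₁ w₂ : V} (h1 : G.Adj w₁ v) (h2 : G.Adj w₂ v)
    (hd1 : G.dist r w₁ < G.dist r v) (hd2 : G.dist r w₂ < G.dist r v) : w₁ = w₂ := by
  have hc := hT.isConnected
  obtain ⟨p₁, hp₁, hl₁⟩ := exists_geodesic hc w₁ r
  obtain ⟨p₂, hp₂, hl₂⟩ := exists_geodesic hc w₂ r
  have hv1 : v ∉ p₁.support := by
    intro hv
    have hsp := geodesic_split hc p₁ hl₁ hv
    have c1 : G.dist v r = G.dist r v := SimpleGraph.dist_comm ..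
    have c2 : G.dist w₁ r = G.dist r w₁ := SimpleGraph.dist_comm ..
    omega
  have hv2 : v ∉ p₂.support := by
    intro hv
    have hsp := geodesic_split hc p₂ hl₂ hv
    have c1 : G.dist v r = G.dist r v := SimpleGraph.dist_comm ..
    have c2 : G.dist w₂ r = G.dist r w₂ := SimpleGraph.dist_comm ..
    omega
  have hP1 : (SimpleGraph.Walk.cons h1.symm p₁).IsPath := hp₁.cons hv1
  have hP2 : (SimpleGraph.Walk.cons h2.symm p₂).IsPath := hp₂.cons hv2
  obtain ⟨P₀, _, huniq⟩ := hT.existsUnique_path v r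
  have e1 := (huniq _ hP1).trans (huniq _ hP2).symm
  have e2 := congrArg SimpleGraph.Walk.support e1
  rw [SimpleGraph.Walk.support_cons, SimpleGraph.Walk.support_cons,
    p₁.support_eq_cons, p₂.support_eq_cons] at e2
  have := (List.cons_eq_cons.mp e2).2
  exact (List.cons_eq_cons.mp this).1

lemma tree_no_triangle (hT : G.IsTree) {a b c : V} (hab : G.Adj a b) (hbc : G.Adj b c)
    (hac : G.Adj a c) : False := by
  obtain ⟨P₀, _, huniq⟩ := hT.existsUnique_path a c
  have h1 : (SimpleGraph.Walk.cons hac SimpleGraph.Walk.nil).IsPath := by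
    simp [SimpleGraph.Walk.cons_isPath_iff, hac.ne]
  have h2 : (SimpleGraph.Walk.cons hab (SimpleGraph.Walk.cons hbc SimpleGraph.Walk.nil)).IsPath := by
    simp [SimpleGraph.Walk.cons_isPath_iff, hab.ne, hbc.ne, hac.ne]
  have e1 := (huniq _ h1).trans (huniq _ h2).symm
  have e2 := congrArg SimpleGraph.Walk.length e1
  simp [SimpleGraph.Walk.length_cons] at e2

end TreeLemmas

lemma tree_struct {n : ℕ} (hn : 3 ≤ n) {T : SimpleGraph (Fin n)} (hT : T.IsTree)
    (hstar : ¬ Nonempty (T ≃g starGraphK (n - 1))) :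
    ∃ u v p2 p3 : Fin n, T.Adj u v ∧ T.Adj v p2 ∧ T.Adj p2 p3 ∧ ¬ T.Adj v p3 ∧
      (∀ w, T.Adj u w → w = v) ∧ T.dist v p2 = 1 ∧ T.dist v p3 = 2 ∧
      u ≠ v ∧ u ≠ p2 ∧ u ≠ p3 ∧ v ≠ p2 ∧ v ≠ p3 ∧ p2 ≠ p3 := by
  have hc := hT.isConnected
  by_cases hdiam : ∃ r x : Fin n, 3 ≤ T.dist r x
  · obtain ⟨r, x₀, hrx⟩ := hdiam
    obtain ⟨u, -, hu⟩ := Finset.exists_max_image Finset.univ (fun x => T.dist r x)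
      ⟨x₀, Finset.mem_univ x₀⟩
    have hd3 : 3 ≤ T.dist r u := le_trans hrx (hu x₀ (Finset.mem_univ x₀))
    have hur : u ≠ r := by
      intro h; rw [h] at hd3; simp [SimpleGraph.dist_self] at hd3
    obtain ⟨p, hp, hlen⟩ := exists_geodesic hc u r
    have hur' : T.dist u r = T.dist r u := SimpleGraph.dist_comm ..
    match p, hp, hlen with
    | .nil, _, hlen => exfalso; rw [SimpleGraph.Walk.length_nil] at hlen; omega
    | .cons (v := v) h1 .nil, _, hlen => exfalso; simp at hlen; omega
    | .cons (v := v) h1 (.cons (v := p2) h2 .nil), _, hlen => exfalso; simp at hlen; omega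
    | .cons (v := v) h1 (.cons (v := p2) h2 (.cons (v := p3) h3 q3)), hp, hlen =>
      have hsup := hp.support_nodup
      simp only [SimpleGraph.Walk.support_cons, List.nodup_cons, List.mem_cons] at hsup
      push_neg at hsup
      obtain ⟨⟨huv, hup2, huq⟩, ⟨hvp2, hvq⟩, ⟨hpq, -⟩⟩ := hsup
      have hup3 : u ≠ p3 := fun h => huq (by rw [h]; exact q3.start_mem_support)
      have hvp3 : v ≠ p3 := fun h => hvq (by rw [h]; exact q3.start_mem_support)
      have hp2p3 : p2 ≠ p3 := fun h => hpq (by rw [h]; exact q3.start_mem_support)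
      have hnadj : ¬ T.Adj v p3 := fun h => tree_no_triangle hT h2 h3 h
      have hd12 : T.dist v p2 = 1 := SimpleGraph.dist_eq_one_iff_adj.mpr h2
      have hd13 : T.dist v p3 = 2 := by
        have hle : T.dist v p3 ≤ 2 := by
          simpa using SimpleGraph.dist_le
            (SimpleGraph.Walk.cons h2 (SimpleGraph.Walk.cons h3 SimpleGraph.Walk.nil))
        have h0 : T.dist v p3 ≠ 0 := fun h => hvp3 (hc.dist_eq_zero_iff.mp h)
        have h1' : T.dist v p3 ≠ 1 := fun h => hnadj (SimpleGraph.dist_eq_one_iff_adj.mp h)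
        omega
      have hvmem : v ∈ (SimpleGraph.Walk.cons h1 (SimpleGraph.Walk.cons h2
          (SimpleGraph.Walk.cons h3 q3))).support := by
        simp [SimpleGraph.Walk.support_cons]
      have hsplit := geodesic_split hc _ hlen hvmem
      have hduv : T.dist u v = 1 := SimpleGraph.dist_eq_one_iff_adj.mpr h1
      have c1 : T.dist v r = T.dist r v := SimpleGraph.dist_comm ..
      have hleaf : ∀ w, T.Adj u w → w = v := by
        intro w hw
        have ha' : T.dist r w ≤ T.dist r u := hu w (Finset.mem_univ w)
        have hb' : T.dist r u ≠ T.dist r w := tree_adj_dist_ne hT r hw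
        exact tree_closer_unique hT (r := r) hw.symm h1.symm (by omega) (by omega)
      exact ⟨u, v, p2, p3, h1, h2, h3, hnadj, hleaf, hd12, hd13,
        huv, hup2, hup3, hvp2, hvp3, hp2p3⟩
  · exfalso
    apply hstar
    push_neg at hdiam
    -- find a vertex of degree ≥ 2
    have hdeg : ∃ c : Fin n, 2 ≤ T.degree c := by
      by_contra hno
      push_neg at hno
      have hsum := T.sum_degrees_eq_twice_card_edges
      have hedges := hT.card_edgeFinset
      rw [Fintype.card_fin] at hedges
      have hle : ∑ v : Fin n, T.degree v ≤ n := by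
        calc ∑ v : Fin n, T.degree v ≤ ∑ _v : Fin n, 1 :=
              Finset.sum_le_sum (fun v _ => Nat.lt_succ_iff.mp (hno v))
          _ = n := by simp
      omega
    obtain ⟨c, hc2⟩ := hdeg
    have hadj : ∀ z, z ≠ c → T.Adj c z := by
      intro z hz
      by_contra hnz
      have hd : T.dist c z = 2 := by
        have hle : T.dist c z < 3 := hdiam c z
        have h0 : T.dist c z ≠ 0 := fun h => hz (hc.dist_eq_zero_iff.mp h).symm
        have h1 : T.dist c z ≠ 1 := fun h => hnz (SimpleGraph.dist_eq_one_iff_adj.mp h)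
        omega
      obtain ⟨pg, hpg, hpglen⟩ := exists_geodesic hc c z
      rw [hd] at hpglen
      match pg, hpg, hpglen with
      | .cons (v := m) hcm (.cons hmz .nil), hpg, _ =>
        -- get w ∈ nbhd c, w ≠ m
        obtain ⟨x, hx, y, hy, hxy⟩ := Finset.one_lt_card.mp hc2
        rw [SimpleGraph.mem_neighborFinset] at hx hy
        have hw : ∃ w, T.Adj c w ∧ w ≠ m := by
          by_cases hxm : x = m
          · exact ⟨y, hy, by rw [← hxm]; exact fun h => hxy h.symm⟩
          · exact ⟨x, hx, hxm⟩
        obtain ⟨w, hcw, hwm⟩ := hw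
        have hzw : z ≠ w := fun h => hnz (h ▸ hcw)
        have hzm : z ≠ m := hmz.ne'
        have hzc : z ≠ c := hz
        have hmc : m ≠ c := hcm.ne'
        have hmw : m ≠ w := fun h => hwm h.symm
        have hcw' : c ≠ w := hcw.ne
        have hwalk : (SimpleGraph.Walk.cons hmz.symm (SimpleGraph.Walk.cons hcm.symm
            (SimpleGraph.Walk.cons hcw SimpleGraph.Walk.nil))).IsPath := by
          simp [SimpleGraph.Walk.cons_isPath_iff, hzw, hzm, hzc, hmc, hmw, hcw']
        obtain ⟨P₀, hP₀, huniq⟩ := hT.existsUnique_path z w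
        obtain ⟨pq, hpq, hpqlen⟩ := exists_geodesic hc z w
        have e1 := (huniq _ hwalk).trans (huniq _ hpq).symm
        have e2 := congrArg SimpleGraph.Walk.length e1
        simp [SimpleGraph.Walk.length_cons] at e2
        have := hdiam z w
        omega
    -- now build the iso
    have hedge : ∀ a b : Fin n, T.Adj a b → a = c ∨ b = c := by
      intro a b hab
      by_contra hne
      push_neg at hne
      exact tree_no_triangle hT (hadj a hne.1) hab (hadj b hne.2)
    have hchar : ∀ a b : Fin n, T.Adj a b ↔ a ≠ b ∧ (a = c ∨ b = c) := by
      intro a b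
      constructor
      · exact fun h => ⟨h.ne, hedge a b h⟩
      · rintro ⟨hne, h | h⟩
        · exact h ▸ hadj b (fun hh => hne (h ▸ hh.symm))  -- a = c: Adj c b
        · exact (h ▸ hadj a (fun hh => hne (h ▸ hh))).symm
    have hn1 : n = n - 1 + 1 := by omega
    let z₀ : Fin n := ⟨0, by omega⟩
    let e : Fin n ≃ Fin (n - 1 + 1) := (Equiv.swap c z₀).trans (finCongr hn1)
    have he0 : ∀ a : Fin n, e a = 0 ↔ a = c := by
      intro a
      constructor
      · intro h
        have : Equiv.swap c z₀ a = z₀ := by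
          apply Fin.ext
          have := congrArg Fin.val h
          simpa [e, finCongr] using this
        have := congrArg (Equiv.swap c z₀) this
        simpa [Equiv.swap_apply_self, Equiv.swap_apply_right] using this
      · intro h
        subst h
        apply Fin.ext
        simp [e, Equiv.swap_apply_left, finCongr, z₀]
    refine ⟨⟨e, ?_⟩⟩
    intro a b
    show (starGraphK (n-1)).Adj (e a) (e b) ↔ T.Adj a b
    rw [hchar]
    constructor
    · rintro h
      rw [starGraphK, SimpleGraph.fromRel_adj] at h
      obtain ⟨hne, h0⟩ := h
      refine ⟨fun hh => hne (hh ▸ rfl), ?_⟩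
      rcases h0 with h0 | h0
      · exact Or.inl ((he0 a).mp h0)
      · exact Or.inr ((he0 b).mp h0)
    · rintro ⟨hne, h0⟩
      rw [starGraphK, SimpleGraph.fromRel_adj]
      refine ⟨fun hh => hne (e.injective hh), ?_⟩
      rcases h0 with h0 | h0
      · exact Or.inl ((he0 a).mpr h0)
      · exact Or.inr ((he0 b).mpr h0)

lemma free_vertex {N : ℕ} {B : SimpleGraph (Fin N)} (p : Fin N) (I J : Finset (Fin N))
    (hJ : ∀ b, b ∈ B.neighborFinset p → (b ∈ I ↔ b ∈ J)) (hcard : J.card < B.degree p) :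
    ∃ w, B.Adj p w ∧ w ∉ I := by
  have h1 : (B.neighborFinset p \ J).Nonempty := by
    rw [← Finset.card_pos]
    have := Finset.le_card_sdiff J (B.neighborFinset p)
    rw [SimpleGraph.card_neighborFinset_eq_degree] at this
    omega
  obtain ⟨w, hw⟩ := h1
  rw [Finset.mem_sdiff] at hw
  exact ⟨w, (SimpleGraph.mem_neighborFinset ..).mp hw.1,
    fun hwI => hw.2 ((hJ w hw.1).mp hwI)⟩

lemma embed_tree {n N : ℕ} (hn : 3 ≤ n) {T : SimpleGraph (Fin n)} (hT : T.IsTree)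
    (hstar : ¬ Nonempty (T ≃g starGraphK (n - 1))) {B : SimpleGraph (Fin N)}
    (hdeg : ∀ x : Fin N, n - 2 ≤ (B.neighborSet x).ncard) (hNmod : ¬ (n - 1) ∣ N) :
    Copies T B := by
  have hdeg' : ∀ x : Fin N, n - 2 ≤ B.degree x := by
    intro x
    have h := hdeg x
    have he : (B.neighborSet x).ncard = B.degree x := by
      calc (B.neighborSet x).ncard = Nat.card (B.neighborSet x) :=
            (Nat.card_coe_set_eq _).symm
        _ = Fintype.card (B.neighborSet x) := Nat.card_eq_fintype_card
        _ = B.degree x := SimpleGraph.card_neighborSet_eq_degree ..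
    omega
  clear hdeg
  have hdeg := hdeg'
  clear hdeg'
  have hc := hT.isConnected
  by_cases hP3 : ∃ z a y : Fin N, B.Adj z a ∧ B.Adj a y ∧ ¬ B.Adj z y ∧ z ≠ y
  · obtain ⟨z, a, y, hza, hay, hnzy, hzy⟩ := hP3
    obtain ⟨u, v, p2, p3, h1, h2, h3, hnadj, hleaf, hd12, hd13, huv, hup2, hup3, hvp2, hvp3,
      hp2p3⟩ := tree_struct hn hT hstar
    set ord : Fin n → ℕ := fun x =>
      if x = v then 0 else if x = p2 then 1 else if x = p3 then 2 else if x = u then n + 2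
      else T.dist v x + 2 with hord
    set key : Fin n → ℕ := fun x => ord x * n + x.val with hkey
    have hordv : ord v = 0 := by simp [hord]
    have hordp2 : ord p2 = 1 := by
      simp [hord, Ne.symm hvp2]
    have hordp3 : ord p3 = 2 := by
      simp [hord, Ne.symm hvp3, Ne.symm hp2p3]
    have hordu : ord u = n + 2 := by
      simp [hord, huv, hup2, hup3]
    have hordgen : ∀ x : Fin n, x ≠ v → x ≠ p2 → x ≠ p3 → x ≠ u → ord x = T.dist v x + 2 := by
      intro x h1' h2' h3' h4'
      simp [hord, h1', h2', h3', h4']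
    have hdistpos : ∀ x : Fin n, x ≠ v → 1 ≤ T.dist v x := by
      intro x hx
      exact hc.pos_dist_of_ne (fun h => hx h.symm)
    have hdistbound : ∀ x : Fin n, T.dist v x ≤ n - 1 := by
      intro x
      obtain ⟨p, hp, hlen⟩ := exists_geodesic hc v x
      have := hp.length_lt
      rw [Fintype.card_fin] at this
      omega
    have hordzero : ∀ x : Fin n, ord x = 0 → x = v := by
      intro x hx
      by_contra hxv
      by_cases h2' : x = p2
      · rw [h2', hordp2] at hx; omega
      by_cases h3' : x = p3
      · rw [h3', hordp3] at hx; omega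
      by_cases h4' : x = u
      · rw [h4', hordu] at hx; omega
      rw [hordgen x hxv h2' h3' h4'] at hx; omega
    have hordbound : ∀ x : Fin n, ord x ≤ n + 2 := by
      intro x
      by_cases h1' : x = v
      · rw [h1', hordv]; omega
      by_cases h2' : x = p2
      · rw [h2', hordp2]; omega
      by_cases h3' : x = p3
      · rw [h3', hordp3]; omega
      by_cases h4' : x = u
      · rw [h4', hordu]
      rw [hordgen x h1' h2' h3' h4']
      have := hdistbound x
      omega
    have hkeymono : ∀ x w : Fin n, ord x < ord w → key x < key w := by
      intro x w h
      simp only [hkey]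
      have hx := x.isLt
      calc ord x * n + x.val < ord x * n + n := by omega
        _ = (ord x + 1) * n := by ring
        _ ≤ ord w * n := Nat.mul_le_mul_right n (by omega)
        _ ≤ ord w * n + w.val := by omega
    have hkeyinj : ∀ x w : Fin n, key x = key w → x = w := by
      intro x w h
      rcases Nat.lt_trichotomy (ord x) (ord w) with hlt | heq | hgt
      · exact absurd h (Nat.ne_of_lt (hkeymono x w hlt))
      · simp only [hkey, heq] at h
        exact Fin.ext (by omega)
      · exact absurd h.symm (Nat.ne_of_lt (hkeymono w x hgt))
    have hkeyne : ∀ x w : Fin n, x ≠ w → key x ≠ key w := fun x w hne h => hne (hkeyinj x w h)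
    -- v, p2, p3 have the three smallest keys; u the largest
    have hkeyvmin : ∀ x : Fin n, x ≠ v → key v < key x := by
      intro x hx
      apply hkeymono
      rw [hordv]
      exact Nat.pos_of_ne_zero (fun h => hx (hordzero x h))
    have hordge2 : ∀ x : Fin n, x ≠ v → x ≠ p2 → 2 ≤ ord x := by
      intro x h1' h2'
      by_cases h3' : x = p3
      · rw [h3', hordp3]
      by_cases h4' : x = u
      · rw [h4', hordu]; omega
      rw [hordgen x h1' h2' h3' h4']; omega
    have hordge3 : ∀ x : Fin n, x ≠ v → x ≠ p2 → x ≠ p3 → 3 ≤ ord x := by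
      intro x h1' h2' h3'
      by_cases h4' : x = u
      · rw [h4', hordu]; omega
      rw [hordgen x h1' h2' h3' h4']
      have := hdistpos x h1'
      omega
    have hkeyp2 : ∀ x : Fin n, x ≠ v → x ≠ p2 → key p2 < key x := by
      intro x h1' h2'
      apply hkeymono
      rw [hordp2]
      exact hordge2 x h1' h2'
    have hkeyp3 : ∀ x : Fin n, x ≠ v → x ≠ p2 → x ≠ p3 → key p3 < key x := by
      intro x h1' h2' h3'
      apply hkeymono
      rw [hordp3]
      exact hordge3 x h1' h2' h3'
    have hkeyumax : ∀ x : Fin n, x ≠ u → key x < key u := by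
      intro x hx
      apply hkeymono
      rw [hordu]
      by_cases h1' : x = v
      · rw [h1', hordv]; omega
      by_cases h2' : x = p2
      · rw [h2', hordp2]; omega
      by_cases h3' : x = p3
      · rw [h3', hordp3]; omega
      rw [hordgen x h1' h2' h3' hx]
      have := hdistbound x
      omega
    have hdvu : T.dist v u = 1 := SimpleGraph.dist_eq_one_iff_adj.mpr h1.symm
    have hdvv : T.dist v v = 0 := SimpleGraph.dist_self
    -- adjacency implies ord increases with distance
    have hS : ∀ x w : Fin n, T.Adj x w → T.dist v x < T.dist v w → ord x < ord w := by
      intro x w hxw hd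
      by_cases hwv : w = v
      · rw [hwv, hdvv] at hd; omega
      by_cases hxv : x = v
      · rw [hxv, hordv]
        exact Nat.pos_of_ne_zero (fun h => hwv (hordzero w h))
      by_cases hxu : x = u
      · exact absurd (hleaf w (hxu ▸ hxw)) (fun h => hwv h)
      have hwu : w ≠ u := by
        intro h
        have := hleaf x (h ▸ hxw).symm
        exact hxv this
      by_cases hxp2 : x = p2
      · rw [hxp2, hordp2]
        by_cases hwp3 : w = p3
        · rw [hwp3, hordp3]; omega
        have hwp2 : w ≠ p2 := fun h => hxw.ne (hxp2.trans h.symm)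
        rw [hordgen w hwv hwp2 hwp3 hwu]; omega
      by_cases hxp3 : x = p3
      · rw [hxp3, hordp3]
        rw [hxp3, hd13] at hd
        by_cases hwp2 : w = p2
        · rw [hwp2, hd12] at hd; omega
        rw [hordgen w hwv hwp2 (fun h => hxw.ne (hxp3.trans h.symm)) hwu]; omega
      -- x generic
      rw [hordgen x hxv hxp2 hxp3 hxu]
      by_cases hwp2 : w = p2
      · rw [hwp2, hd12] at hd
        have := hdistpos x hxv
        omega
      by_cases hwp3 : w = p3
      · exfalso
        rw [hwp3, hd13] at hd
        have hx1 : T.dist v x = 1 := by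
          have := hdistpos x hxv
          omega
        have := tree_closer_unique hT (r := v) (v := p3) (hwp3 ▸ hxw) h3
          (by omega) (by rw [hd12]; omega)
        exact hxp2 this
      rw [hordgen w hwv hwp2 hwp3 hwu]
      omega
    -- parent with unique smaller key among neighbours
    have hparent : ∀ x : Fin n, x ≠ v → ∃ p, T.Adj p x ∧ key p < key x ∧
        (∀ q, T.Adj q x → key q < key x → q = p) := by
      intro x hx
      obtain ⟨w, hwx, hwd⟩ := tree_parent hc (r := v) hx
      have hkw : key w < key x := hkeymono w x (hS w x hwx (by omega))
      refine ⟨w, hwx, hkw, ?_⟩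
      intro q hq hkq
      have hne := tree_adj_dist_ne hT v (hq : T.Adj q x)
      have hdq : T.dist v q < T.dist v x := by
        by_contra hge
        have hgt : T.dist v x < T.dist v q := by omega
        have := hkeymono x q (hS x q hq.symm hgt)
        omega
      exact tree_closer_unique hT (r := v) hq hwx hdq (by omega)
    -- the greedy embedding
    have hgreedy : ∀ k : ℕ, ∀ S : Finset (Fin n), S.card = k →
        3 ≤ S.card → (∀ x ∈ S, ∀ w, key w < key x → w ∈ S) →
        ∃ f : Fin n → Fin N, f v = z ∧ f p2 = a ∧ f p3 = y ∧
          Set.InjOn f ↑S ∧ (∀ x ∈ S, ∀ x' ∈ S, T.Adj x x' → B.Adj (f x) (f x')) := by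
      intro k
      induction k using Nat.strong_induction_on with
      | _ k IH =>
      intro S hSk hS3 hKLS
      have hvS : v ∈ S := by
        obtain ⟨x, hx⟩ := Finset.card_pos.mp (show 0 < S.card by omega)
        by_cases hxv : x = v
        · exact hxv ▸ hx
        · exact hKLS x hx v (hkeyvmin x hxv)
      have hp2S : p2 ∈ S := by
        obtain ⟨x, hx, hxv⟩ := Finset.exists_mem_ne (show 1 < S.card by omega) v
        by_cases hxp2 : x = p2
        · exact hxp2 ▸ hx
        · exact hKLS x hx p2 (hkeyp2 x hxv hxp2)
      have hp3S : p3 ∈ S := by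
        have hcard2 : 1 ≤ ((S.erase v).erase p2).card := by
          have e1 : ((S.erase v).erase p2).card = S.card - 2 := by
            rw [Finset.card_erase_of_mem (Finset.mem_erase.mpr ⟨fun h => hvp2 h.symm, hp2S⟩),
              Finset.card_erase_of_mem hvS]
            omega
          omega
        obtain ⟨x, hx⟩ := Finset.card_pos.mp (show 0 < ((S.erase v).erase p2).card by omega)
        obtain ⟨hxp2', hx'⟩ := Finset.mem_erase.mp hx
        obtain ⟨hxv', hxS⟩ := Finset.mem_erase.mp hx'
        by_cases hxp3 : x = p3
        · exact hxp3 ▸ hxS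
        · exact hKLS x hxS p3 (hkeyp3 x hxv' hxp2' hxp3)
      by_cases hk3 : S.card = 3
      · -- base case : S = {v, p2, p3}
        have hSeq : S = {v, p2, p3} := by
          have hsub : ({v, p2, p3} : Finset (Fin n)) ⊆ S := by
            intro s hs
            simp only [Finset.mem_insert, Finset.mem_singleton] at hs
            rcases hs with h | h | h <;> subst h <;> assumption
          have hcard3 : ({v, p2, p3} : Finset (Fin n)).card = 3 := by
            rw [Finset.card_insert_of_notMem (by simp [hvp2, hvp3]),
              Finset.card_insert_of_notMem (by simp [hp2p3]), Finset.card_singleton]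
          exact (Finset.eq_of_subset_of_card_le hsub (by omega)).symm
        refine ⟨fun x' => if x' = v then z else if x' = p2 then a else if x' = p3 then y else z,
          ?_, ?_, ?_, ?_, ?_⟩
        · show (if v = v then z else _) = z
          rw [if_pos rfl]
        · show (if p2 = v then z else if p2 = p2 then a else _) = a
          rw [if_neg (Ne.symm hvp2 : p2 ≠ v), if_pos rfl]
        · show (if p3 = v then z else if p3 = p2 then a else if p3 = p3 then y else z) = y
          rw [if_neg (Ne.symm hvp3 : p3 ≠ v), if_neg (Ne.symm hp2p3 : p3 ≠ p2), if_pos rfl]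
        · intro s hs s' hs' heq
          rw [hSeq] at hs hs'
          simp only [Finset.coe_insert, Set.mem_insert_iff, Finset.coe_singleton,
            Set.mem_singleton_iff] at hs hs'
          rcases hs with h | h | h <;> rcases hs' with h' | h' | h' <;> rw [h, h'] at heq ⊢ <;>
            simp only [if_pos rfl, if_neg (Ne.symm hvp2 : p2 ≠ v), if_neg (Ne.symm hvp3 : p3 ≠ v),
              if_neg (Ne.symm hp2p3 : p3 ≠ p2)] at heq <;>
            first
              | rfl
              | exact absurd heq hza.ne
              | exact absurd heq.symm hza.ne
              | exact absurd heq hzy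
              | exact absurd heq.symm hzy
              | exact absurd heq hay.ne
              | exact absurd heq.symm hay.ne
        · intro s hs s' hs' hadj
          rw [hSeq] at hs hs'
          simp only [Finset.mem_insert, Finset.mem_singleton] at hs hs'
          rcases hs with h | h | h <;> rcases hs' with h' | h' | h' <;> rw [h, h'] at hadj ⊢ <;>
            simp only [if_pos rfl, if_neg (Ne.symm hvp2 : p2 ≠ v), if_neg (Ne.symm hvp3 : p3 ≠ v),
              if_neg (Ne.symm hp2p3 : p3 ≠ p2)] <;>
            first
              | exact (T.loopless.irrefl _ hadj).elim
              | exact (hnadj hadj).elim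
              | exact (hnadj hadj.symm).elim
              | exact hza
              | exact hza.symm
              | exact hay
              | exact hay.symm
      · -- inductive step
        have hk4 : 4 ≤ S.card := by omega
        obtain ⟨x, hxS, hxmax⟩ := Finset.exists_max_image S key
          (Finset.card_pos.mp (show 0 < S.card by omega))
        have hxv : x ≠ v := by
          intro h
          have h2' := hxmax p2 hp2S
          rw [h] at h2'
          have := hkeyvmin p2 (Ne.symm hvp2)
          omega
        have hxp2 : x ≠ p2 := by
          intro h
          have h2' := hxmax p3 hp3S
          rw [h] at h2'
          have := hkeyp2 p3 (Ne.symm hvp3) (Ne.symm hp2p3)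
          omega
        have hxp3 : x ≠ p3 := by
          intro h
          have hcard1 : 1 ≤ (((S.erase v).erase p2).erase p3).card := by
            rw [Finset.card_erase_of_mem (Finset.mem_erase.mpr ⟨Ne.symm hp2p3,
                Finset.mem_erase.mpr ⟨Ne.symm hvp3, hp3S⟩⟩)]
            rw [Finset.card_erase_of_mem (Finset.mem_erase.mpr ⟨Ne.symm hvp2, hp2S⟩),
              Finset.card_erase_of_mem hvS]
            omega
          obtain ⟨s, hs⟩ := Finset.card_pos.mp (show 0 < (((S.erase v).erase p2).erase p3).card
            by omega)
          obtain ⟨hsp3, hs'⟩ := Finset.mem_erase.mp hs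
          obtain ⟨hsp2, hs''⟩ := Finset.mem_erase.mp hs'
          obtain ⟨hsv, hsS⟩ := Finset.mem_erase.mp hs''
          have hk1 := hkeyp3 s hsv hsp2 hsp3
          have hk2 := hxmax s hsS
          rw [h] at hk2
          omega
        set S' := S.erase x with hS'def
        have hS'card : S'.card = k - 1 := by
          rw [hS'def, Finset.card_erase_of_mem hxS, hSk]
        obtain ⟨f, hfv, hfp2, hfp3, hfinj, hfhom⟩ := IH (k - 1) (by omega) S' hS'card
          (by omega) (by
            intro x' hx' w hw
            obtain ⟨hx'x, hx'S⟩ := Finset.mem_erase.mp hx'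
            refine Finset.mem_erase.mpr ⟨?_, hKLS x' hx'S w hw⟩
            intro hwx
            rw [hwx] at hw
            have := hxmax x' hx'S
            omega)
        have hvS' : v ∈ S' := Finset.mem_erase.mpr ⟨Ne.symm hxv, hvS⟩
        obtain ⟨p, hpx, hkpx, huniq⟩ := hparent x hxv
        have hpS : p ∈ S := hKLS x hxS p hkpx
        have hpS' : p ∈ S' := Finset.mem_erase.mpr ⟨fun h => by rw [h] at hkpx; omega, hpS⟩
        set I := S'.image f with hIdef
        have hIcard : I.card = k - 1 := by rw [hIdef, Finset.card_image_of_injOn hfinj, hS'card]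
        have hfree : ∃ w, B.Adj (f p) w ∧ w ∉ I := by
          by_cases hxu : x = u
          · have hpv : p = v := hleaf p (by rw [hxu] at hpx; exact hpx.symm)
            have hfpz : f p = z := by rw [hpv, hfv]
            have hzI : z ∈ I := by
              rw [hIdef]
              exact hfv ▸ Finset.mem_image_of_mem f hvS'
            have hp3S' : p3 ∈ S' := Finset.mem_erase.mpr ⟨fun h => hup3 (h.trans hxu).symm, hp3S⟩
            have hyI : y ∈ I := by
              rw [hIdef]
              exact hfp3 ▸ Finset.mem_image_of_mem f hp3S'
            apply free_vertex (f p) I ((I.erase z).erase y)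
            · intro b hb
              rw [SimpleGraph.mem_neighborFinset, hfpz] at hb
              have hbz : b ≠ z := hb.ne'
              have hby : b ≠ y := fun h => hnzy (h ▸ hb)
              rw [Finset.mem_erase, Finset.mem_erase]
              tauto
            · have hyIz : y ∈ I.erase z := Finset.mem_erase.mpr ⟨Ne.symm hzy, hyI⟩
              rw [Finset.card_erase_of_mem hyIz, Finset.card_erase_of_mem hzI, hIcard]
              have hkn : k = n := by
                have hSuniv : S = Finset.univ := by
                  apply Finset.eq_univ_iff_forall.mpr
                  intro w'
                  by_cases hwx : w' = x
                  · exact hwx ▸ hxS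
                  · exact hKLS x hxS w' (by
                      rw [hxu]
                      exact hkeyumax w' (fun h => hwx (h.trans hxu.symm)))
                rw [← hSk, hSuniv, Finset.card_univ, Fintype.card_fin]
              have := hdeg (f p)
              omega
          · have huS : u ∉ S := by
              intro hu'
              have h2' := hxmax u hu'
              have := hkeyumax x hxu
              omega
            have hcardle : S.card ≤ n - 1 := by
              have hsub : S ⊆ Finset.univ.erase u := by
                intro s hs
                exact Finset.mem_erase.mpr ⟨fun h => huS (h ▸ hs), Finset.mem_univ s⟩
              have := Finset.card_le_card hsub
              rw [Finset.card_erase_of_mem (Finset.mem_univ u), Finset.card_univ,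
                Fintype.card_fin] at this
              exact this
            have hfpI : f p ∈ I := Finset.mem_image_of_mem f hpS'
            apply free_vertex (f p) I (I.erase (f p))
            · intro b hb
              rw [SimpleGraph.mem_neighborFinset] at hb
              rw [Finset.mem_erase]
              have : b ≠ f p := hb.ne'
              tauto
            · rw [Finset.card_erase_of_mem hfpI, hIcard]
              have := hdeg (f p)
              omega
        obtain ⟨w, hwadj, hwI⟩ := hfree
        have hupd : ∀ s : Fin n, s ≠ x → Function.update f x w s = f s :=
          fun s hs => Function.update_of_ne hs w f
        have hmemS' : ∀ s, s ∈ S → s ≠ x → s ∈ S' := fun s hs hsx => Finset.mem_erase.mpr ⟨hsx, hs⟩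
        refine ⟨Function.update f x w, (hupd v (Ne.symm hxv)).trans hfv,
          (hupd p2 (Ne.symm hxp2)).trans hfp2, (hupd p3 (Ne.symm hxp3)).trans hfp3, ?_, ?_⟩
        · intro s hs s' hs' heq
          simp only [Finset.mem_coe] at hs hs'
          by_cases hsx : s = x <;> by_cases hs'x : s' = x
          · rw [hsx, hs'x]
          · exfalso
            rw [hsx, Function.update_self, hupd s' hs'x] at heq
            exact hwI (heq ▸ Finset.mem_image_of_mem f (hmemS' s' hs' hs'x))
          · exfalso
            rw [hs'x, Function.update_self, hupd s hsx] at heq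
            exact hwI (heq ▸ Finset.mem_image_of_mem f (hmemS' s hs hsx))
          · rw [hupd s hsx, hupd s' hs'x] at heq
            exact hfinj (Finset.mem_coe.mpr (hmemS' s hs hsx))
              (Finset.mem_coe.mpr (hmemS' s' hs' hs'x)) heq
        · intro s hs s' hs' hadj
          by_cases hsx : s = x <;> by_cases hs'x : s' = x
          · rw [hsx, hs'x] at hadj
            exact (T.loopless.irrefl _ hadj).elim
          · have hs'S' : s' ∈ S' := hmemS' s' hs' hs'x
            have hkey' : key s' < key x := by
              have := hxmax s' hs'
              have := hkeyne s' x hs'x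
              omega
            have hs'p : s' = p := huniq s' (by rw [← hsx]; exact hadj.symm) hkey'
            rw [hsx, Function.update_self, hupd s' hs'x, hs'p]
            exact hwadj.symm
          · have hsS' : s ∈ S' := hmemS' s hs hsx
            have hkey' : key s < key x := by
              have := hxmax s hs
              have := hkeyne s x hsx
              omega
            have hsp : s = p := huniq s (by rw [← hs'x]; exact hadj) hkey'
            rw [hs'x, Function.update_self, hupd s hsx, hsp]
            exact hwadj
          · rw [hupd s hsx, hupd s' hs'x]
            exact hfhom s (hmemS' s hs hsx) s' (hmemS' s' hs' hs'x) hadj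
    obtain ⟨f, -, -, -, hinj, hhom⟩ := hgreedy n Finset.univ (by simp) (by simp; omega)
      (fun x _ w _ => Finset.mem_univ w)
    exact ⟨f, fun s s' h => hinj (by simp) (by simp) h,
      fun a' b' hab => hhom a' (Finset.mem_univ a') b' (Finset.mem_univ b') hab⟩
  · -- B is a disjoint union of cliques
    push_neg at hP3
    have htrans : ∀ z a y : Fin N, B.Adj z a → B.Adj a y → z ≠ y → B.Adj z y := by
      intro z a y h1' h2' h3'
      by_contra hn'
      exact h3' (hP3 z a y h1' h2' hn')
    let s : Setoid (Fin N) := ⟨fun x y => x = y ∨ B.Adj x y, by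
      constructor
      · exact fun x => Or.inl rfl
      · intro x y h
        rcases h with h | h
        · exact Or.inl h.symm
        · exact Or.inr h.symm
      · intro x y w h1' h2'
        rcases h1' with h1' | h1'
        · exact h1' ▸ h2'
        · rcases h2' with h2' | h2'
          · exact Or.inr (h2' ▸ h1')
          · by_cases hxw : x = w
            · exact Or.inl hxw
            · exact Or.inr (htrans x y w h1' h2' hxw)⟩
    have hfiber : ∀ q : Quotient s, n - 1 ≤ (Finset.univ.filter (fun x => Quotient.mk s x = q)).card := by
      intro q
      obtain ⟨x₀, rfl⟩ := Quotient.exists_rep q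
      have hsub : insert x₀ (B.neighborFinset x₀) ⊆ Finset.univ.filter (fun x => Quotient.mk s x = Quotient.mk s x₀) := by
        intro b hb
        rcases Finset.mem_insert.mp hb with h | h
        · exact Finset.mem_filter.mpr ⟨Finset.mem_univ _, by rw [h]⟩
        · rw [SimpleGraph.mem_neighborFinset] at h
          simp only [Finset.mem_filter, Finset.mem_univ, true_and]
          exact Quotient.sound (Or.inr h.symm)
      have hcard : (insert x₀ (B.neighborFinset x₀)).card = B.degree x₀ + 1 := by
        rw [Finset.card_insert_of_notMem (by simp)]
        rfl
      have := Finset.card_le_card hsub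
      have := hdeg x₀
      omega
    by_cases hbig : ∃ q : Quotient s, n ≤ (Finset.univ.filter (fun x => Quotient.mk s x = q)).card
    · obtain ⟨q, hq⟩ := hbig
      obtain ⟨F, hFsub, hFcard⟩ := Finset.exists_subset_card_eq hq
      refine ⟨fun i => (F.orderIsoOfFin hFcard i : Fin N), ?_, ?_⟩
      · intro i j hij
        exact (F.orderIsoOfFin hFcard).injective (Subtype.ext hij)
      · intro i j hij
        have hne : ((F.orderIsoOfFin hFcard i : Fin N)) ≠ ((F.orderIsoOfFin hFcard j : Fin N)) := by
          intro h
          exact hij.ne ((F.orderIsoOfFin hFcard).injective (Subtype.ext h))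
        have hiq := hFsub (F.orderIsoOfFin hFcard i).2
        have hjq := hFsub (F.orderIsoOfFin hFcard j).2
        simp only [Finset.mem_filter, Finset.mem_univ, true_and] at hiq hjq
        have : s.r _ _ := Quotient.exact (hiq.trans hjq.symm)
        rcases this with h | h
        · exact absurd h hne
        · exact h
    · push_neg at hbig
      have hall : ∀ q : Quotient s, (Finset.univ.filter (fun x => Quotient.mk s x = q)).card = n - 1 := by
        intro q
        have h1' := hfiber q
        have h2' := hbig q
        omega
      have hsum : (Finset.univ : Finset (Fin N)).card =
          ∑ q ∈ (Finset.univ : Finset (Quotient s)),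
            (Finset.univ.filter (fun x => Quotient.mk s x = q)).card :=
        Finset.card_eq_sum_card_fiberwise (fun x _ => Finset.mem_univ _)
      rw [Finset.card_univ, Fintype.card_fin] at hsum
      have hstep : ∑ q ∈ (Finset.univ : Finset (Quotient s)),
          (Finset.univ.filter (fun x => Quotient.mk s x = q)).card = (n - 1) * Fintype.card (Quotient s) := by
        simp only [hall, Finset.sum_const, Finset.card_univ, smul_eq_mul]
        ring
      have hNeq : N = (n - 1) * Fintype.card (Quotient s) := hsum.trans hstep
      exact absurd ⟨_, hNeq⟩ hNmod

lemma ramseyProp2_mono {α β : Type*} {G₁ : SimpleGraph α} {G₂ : SimpleGraph β} {m M : ℕ}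
    (h : m ≤ M) (hm : RamseyProp2 m G₁ G₂) : RamseyProp2 M G₁ G₂ := by
  intro R
  have hinj : Function.Injective (Fin.castLE h) := Fin.castLE_injective h
  rcases hm (SimpleGraph.comap (Fin.castLE h) R) with ⟨f, hf, hhom⟩ | ⟨f, hf, hhom⟩
  · exact Or.inl ⟨Fin.castLE h ∘ f, hinj.comp hf, fun a b hab => hhom hab⟩
  · refine Or.inr ⟨Fin.castLE h ∘ f, hinj.comp hf, fun a b hab => ?_⟩
    have hcadj := hhom hab
    rw [SimpleGraph.compl_adj] at hcadj ⊢
    refine ⟨fun hh => hcadj.1 (hinj hh), fun hh => hcadj.2 ?_⟩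
    rw [SimpleGraph.comap_adj]
    exact hh

lemma no_ramsey_low {t n ℓ : ℕ} (hn : 3 ≤ n) (hℓ : ℓ = t * (n - 1) + 2)
    {T : SimpleGraph (Fin n)} (hT : T.IsTree) :
    ¬ RamseyProp2 ((t + 1) * (n - 1)) (starGraphK ℓ) T := by
  intro hRam
  set M := (t + 1) * (n - 1) with hM
  have hMeq : M = t * (n - 1) + (n - 1) := by rw [hM]; ring
  have hn1pos : 0 < n - 1 := by omega
  -- block injection
  have hg : ∀ b : ℕ, b ≤ t → ∀ j : Fin (n - 1), b * (n - 1) + j.val < M := by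
    intro b hb j
    have := j.isLt
    have := Nat.mul_le_mul_right (n - 1) hb
    omega
  have hgdiv : ∀ b : ℕ, ∀ j : Fin (n - 1), (b * (n - 1) + j.val) / (n - 1) = b := by
    intro b j
    rw [Nat.mul_comm, Nat.mul_add_div hn1pos, Nat.div_eq_of_lt j.isLt]
    omega
  have hble : ∀ c : Fin M, c.val / (n - 1) ≤ t := by
    intro c
    apply Nat.le_of_lt_succ
    rw [Nat.div_lt_iff_lt_mul hn1pos]
    exact c.isLt
  set R : SimpleGraph (Fin M) :=
    SimpleGraph.fromRel (fun x y => x.val / (n - 1) ≠ y.val / (n - 1)) with hRdef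
  rcases hRam R with ⟨f, hf, hhom⟩ | ⟨f, hf, hhom⟩
  · -- a red star K_{1,ℓ} : impossible
    set b := (f 0).val / (n - 1) with hb
    have hleafdiv : ∀ i : Fin ℓ, (f i.succ).val / (n - 1) ≠ b := by
      intro i
      have hadj : (starGraphK ℓ).Adj i.succ 0 := by
        rw [starGraphK, SimpleGraph.fromRel_adj]
        exact ⟨Fin.succ_ne_zero i, Or.inr rfl⟩
      have hR := hhom hadj
      rw [hRdef, SimpleGraph.fromRel_adj] at hR
      rcases hR.2 with h | h
      · exact h
      · exact Ne.symm h
    set D := Finset.univ.filter (fun w : Fin M => ¬ (w.val / (n - 1) = b)) with hD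
    set E := Finset.univ.filter (fun w : Fin M => w.val / (n - 1) = b) with hE
    have hDE : E.card + D.card = M := by
      have hq := Finset.card_filter_add_card_filter_not (s := (Finset.univ : Finset (Fin M)))
        (p := fun w : Fin M => w.val / (n - 1) = b)
      rw [Finset.card_univ, Fintype.card_fin] at hq
      rw [hE, hD]
      exact hq
    have hLD : Finset.univ.image (fun i : Fin ℓ => f i.succ) ⊆ D := by
      intro w hw
      obtain ⟨i, -, rfl⟩ := Finset.mem_image.mp hw
      exact Finset.mem_filter.mpr ⟨Finset.mem_univ _, hleafdiv i⟩
    have hLcard : (Finset.univ.image (fun i : Fin ℓ => f i.succ)).card = ℓ := by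
      rw [Finset.card_image_of_injective _ (fun i j hij => Fin.succ_injective ℓ (hf hij)),
        Finset.card_univ, Fintype.card_fin]
    have hGE : Finset.univ.image
        (fun j : Fin (n-1) => (⟨b * (n-1) + j.val, hg b (hble (f 0)) j⟩ : Fin M)) ⊆ E := by
      intro w hw
      obtain ⟨j, -, rfl⟩ := Finset.mem_image.mp hw
      exact Finset.mem_filter.mpr ⟨Finset.mem_univ _, hgdiv b j⟩
    have hGcard : (Finset.univ.image
        (fun j : Fin (n-1) => (⟨b * (n-1) + j.val, hg b (hble (f 0)) j⟩ : Fin M))).card = n - 1 := by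
      rw [Finset.card_image_of_injective _ (fun i j hij => by
          have := congrArg Fin.val hij
          simp only at this
          exact Fin.ext (by omega)),
        Finset.card_univ, Fintype.card_fin]
    have c1 : ℓ ≤ D.card := hLcard ▸ Finset.card_le_card hLD
    have c2 : n - 1 ≤ E.card := hGcard ▸ Finset.card_le_card hGE
    omega
  · -- a blue T : impossible
    have hsame : ∀ a b : Fin n, T.Adj a b → (f a).val / (n - 1) = (f b).val / (n - 1) := by
      intro a b hab
      have hB := hhom hab
      rw [SimpleGraph.compl_adj, hRdef, SimpleGraph.fromRel_adj] at hB
      push_neg at hB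
      exact (hB.2 hB.1).1
    have hwalk : ∀ (x y : Fin n), T.Walk x y → (f x).val / (n - 1) = (f y).val / (n - 1) := by
      intro x y w
      induction w with
      | nil => rfl
      | cons h p ih => exact (hsame _ _ h).trans ih
    have x₀ : Fin n := ⟨0, by omega⟩
    set b := (f x₀).val / (n - 1) with hb
    set E := Finset.univ.filter (fun w : Fin M => w.val / (n - 1) = b) with hE
    have hsub : Finset.univ.image f ⊆ E := by
      intro w hw
      obtain ⟨x, -, rfl⟩ := Finset.mem_image.mp hw
      obtain ⟨wk⟩ := hT.isConnected x₀ x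
      exact Finset.mem_filter.mpr ⟨Finset.mem_univ _, (hwalk x₀ x wk).symm⟩
    have hEsub : E ⊆ Finset.univ.image
        (fun j : Fin (n-1) => (⟨b * (n-1) + j.val, hg b (hble (f x₀)) j⟩ : Fin M)) := by
      intro w hw
      have hwdiv := (Finset.mem_filter.mp hw).2
      apply Finset.mem_image.mpr
      refine ⟨⟨w.val % (n - 1), Nat.mod_lt _ hn1pos⟩, Finset.mem_univ _, ?_⟩
      apply Fin.ext
      simp only
      rw [← hwdiv]
      exact Nat.div_add_mod' _ _
    have hcard1 : (Finset.univ.image f).card = n := by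
      rw [Finset.card_image_of_injective _ hf, Finset.card_univ, Fintype.card_fin]
    have hcard2 : (Finset.univ.image
        (fun j : Fin (n-1) => (⟨b * (n-1) + j.val, hg b (hble (f x₀)) j⟩ : Fin M))).card ≤ n - 1 := by
      apply le_trans (Finset.card_image_le)
      rw [Finset.card_univ, Fintype.card_fin]
    have := Finset.card_le_card (hsub.trans hEsub)
    omega

theorem stmt6 (t n ℓ : ℕ) (hn : 3 ≤ n) (hℓ : ℓ = t * (n - 1) + 2)
    (T : SimpleGraph (Fin n)) (hT : T.IsTree)
    (hstar : ¬ Nonempty (T ≃g starGraphK (n - 1))) :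
    ramsey2 (starGraphK ℓ) T = ℓ + n - 2 := by
  have hNeq : ℓ + n - 2 = (t + 1) * (n - 1) + 1 := by
    have : (t + 1) * (n - 1) = t * (n - 1) + (n - 1) := by ring
    omega
  have hcopy_star : ∀ {N : ℕ} (R : SimpleGraph (Fin N)) (x : Fin N),
      ℓ ≤ R.degree x → Copies (starGraphK ℓ) R := by
    intro N R x hx
    obtain ⟨F, hFsub, hFcard⟩ := Finset.exists_subset_card_eq (s := R.neighborFinset x) (n := ℓ)
      (by rw [SimpleGraph.card_neighborFinset_eq_degree]; exact hx)
    have hmemF : ∀ w : F, R.Adj x w :=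
      fun w => (SimpleGraph.mem_neighborFinset ..).mp (hFsub w.2)
    refine ⟨fun i => if h : i = 0 then x else (F.orderIsoOfFin hFcard (i.pred h) : Fin N), ?_, ?_⟩
    · intro i j hij
      dsimp only at hij
      by_cases hi : i = 0 <;> by_cases hj : j = 0
      · rw [hi, hj]
      · exfalso
        rw [dif_pos hi, dif_neg hj] at hij
        exact R.loopless.irrefl x (hij ▸ hmemF (F.orderIsoOfFin hFcard (j.pred hj)))
      · exfalso
        rw [dif_neg hi, dif_pos hj] at hij
        exact R.loopless.irrefl x (hij ▸ hmemF (F.orderIsoOfFin hFcard (i.pred hi)))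
      · rw [dif_neg hi, dif_neg hj] at hij
        have hp := (F.orderIsoOfFin hFcard).injective (Subtype.ext hij)
        have hp' := congrArg Fin.succ hp
        rwa [Fin.succ_pred, Fin.succ_pred] at hp'
    · intro a b hab
      dsimp only
      rw [starGraphK, SimpleGraph.fromRel_adj] at hab
      obtain ⟨hne, h0 | h0⟩ := hab
      · have hb0 : b ≠ 0 := fun h => hne (h0.trans h.symm)
        rw [dif_pos h0, dif_neg hb0]
        exact hmemF _
      · have ha0 : a ≠ 0 := fun h => hne (h.trans h0.symm)
        rw [dif_pos h0, dif_neg ha0]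
        exact (hmemF _).symm
  have hNmod : ¬ (n - 1) ∣ (ℓ + n - 2) := by
    rw [hNeq]
    intro hdvd
    have h1 : (n - 1) ∣ (t + 1) * (n - 1) := dvd_mul_left _ _
    have h2 : (n - 1) ∣ 1 := (Nat.dvd_add_right h1).mp hdvd
    have := Nat.le_of_dvd one_pos h2
    omega
  have hup : RamseyProp2 (ℓ + n - 2) (starGraphK ℓ) T := by
    intro R
    by_cases hcs : Copies (starGraphK ℓ) R
    · exact Or.inl hcs
    · refine Or.inr (embed_tree hn hT hstar ?_ hNmod)
      intro x
      have hdegR : R.degree x ≤ ℓ - 1 := by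
        by_contra hgt
        push_neg at hgt
        exact hcs (hcopy_star R x (by omega))
      have hcompl : Rᶜ.degree x = Fintype.card (Fin (ℓ + n - 2)) - 1 - R.degree x :=
        SimpleGraph.degree_compl R x
      rw [Fintype.card_fin] at hcompl
      have hl2 : 2 ≤ ℓ := by rw [hℓ]; omega
      have he : (Rᶜ.neighborSet x).ncard = Rᶜ.degree x := by
        calc (Rᶜ.neighborSet x).ncard = Nat.card (Rᶜ.neighborSet x) :=
              (Nat.card_coe_set_eq _).symm
          _ = Fintype.card (Rᶜ.neighborSet x) := Nat.card_eq_fintype_card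
          _ = Rᶜ.degree x := SimpleGraph.card_neighborSet_eq_degree ..
      omega
  have hlow : ∀ m ∈ {N | RamseyProp2 N (starGraphK ℓ) T}, ℓ + n - 2 ≤ m := by
    intro m hm
    by_contra hlt
    push_neg at hlt
    exact no_ramsey_low hn hℓ hT (ramseyProp2_mono (by omega) hm)
  exact le_antisymm
    (Nat.sInf_le (show (ℓ + n - 2) ∈ {N | RamseyProp2 N (starGraphK ℓ) T} from hup))
    (le_csInf ⟨_, hup⟩ hlow)
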